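/- Let p > (n+2)/(n-2), n > 2, and let v be a positive C² solution on (0,∞) of v'' + ((n-1-2α)/r + r/2) v' + r^{-2}(v^p - L^{p-1} v) = 0 with v, r v', r² v'' bounded on (0,1). Then ∫_ρ^R v'(r)² r dr ≤ C uniformly for 0 < ρ < R ≤ 1. -/

import Mathlib

open Set Filter

open Topology

theorem stmt8 (n : ℕ) (hn : 2 < n) (p : ℝ) (hp : ((n : ℝ) + 2) / ((n : ℝ) - 2) < p)
    (α L : ℝ) (hα : α = 2 / (p - 1)) (hL : 0 < L)
    (hLp : L ^ (p - 1) = 2 / (p - 1) ^ 2 * (((n : ℝ) - 2) * p - n))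
    (v : ℝ → ℝ) (hpos : ∀ r > 0, 0 < v r)
    (hC2 : ContDiffOn ℝ 2 v (Ioi 0))
    (heq : ∀ r > 0, deriv (deriv v) r + (((n : ℝ) - 1 - 2 * α) / r + r / 2) * deriv v r
      + r ^ (-2 : ℝ) * (v r ^ p - L ^ (p - 1) * v r) = 0)
    (C₀ : ℝ) (hbd : ∀ r ∈ Ioo (0:ℝ) 1,
      v r + r * |deriv v r| + r ^ 2 * |deriv (deriv v) r| ≤ C₀) :
    ∃ C > 0, ∀ ρ R : ℝ, 0 < ρ → ρ < R → R ≤ 1 →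
      (∫ r in ρ..R, (deriv v r) ^ 2 * r) ≤ C := by
  have hn2 : (2:ℝ) < (n:ℝ) := by exact_mod_cast hn
  have hn2' : (0:ℝ) < (n:ℝ) - 2 := by linarith
  have hp1 : 1 < p := by
    have h1 : ((n:ℝ) + 2) / ((n:ℝ) - 2) > 1 := by
      rw [gt_iff_lt, lt_div_iff₀ hn2']; linarith
    linarith
  have hnp : (n:ℝ) + 2 < p * ((n:ℝ) - 2) := (div_lt_iff₀ hn2').mp hp
  set c : ℝ := (n:ℝ) - 2 - 2 * α with hc_def
  have hc : 0 < c := by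
    rw [hc_def, hα]
    have hp0 : (0:ℝ) < p - 1 := by linarith
    have h4 : 2 * (2 / (p - 1)) = 4 / (p - 1) := by ring
    rw [h4, sub_pos, div_lt_iff₀ hp0]
    nlinarith
  -- derivative facts
  have hder1 : ∀ r ∈ Ioi (0:ℝ), HasDerivAt v (deriv v r) r := fun r hr =>
    ((hC2.contDiffAt (Ioi_mem_nhds hr)).differentiableAt (by norm_num)).hasDerivAt
  have hC1' : ContDiffOn ℝ 1 (deriv v) (Ioi 0) :=
    hC2.deriv_of_isOpen isOpen_Ioi (by norm_num)
  have hder2 : ∀ r ∈ Ioi (0:ℝ), HasDerivAt (deriv v) (deriv (deriv v) r) r := fun r hr =>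
    ((hC1'.contDiffAt (Ioi_mem_nhds hr)).differentiableAt (by norm_num)).hasDerivAt
  have hgcont : ContinuousOn (deriv v) (Ioi 0) := hC1'.continuousOn
  have hvcont : ContinuousOn v (Ioi 0) := hC2.continuousOn
  have hLpos : 0 < L ^ (p - 1) := Real.rpow_pos_of_pos hL _
  -- energy
  set E : ℝ → ℝ := fun r => r^2 * (deriv v r)^2 / 2 + v r ^ (p+1) / (p+1)
      - L ^ (p-1) * (v r)^2 / 2 with hE_def
  have hE : ∀ r ∈ Ioi (0:ℝ), HasDerivAt E
      (-(c * ((deriv v r)^2 * r) + r^3/2 * (deriv v r)^2)) r := by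
    intro r hr
    have hr0 : (0:ℝ) < r := hr
    have hv := hder1 r hr
    have hg := hder2 r hr
    have h1 : HasDerivAt (fun s => s^2 * (deriv v s)^2 / 2)
        (r * (deriv v r)^2 + r^2 * deriv v r * deriv (deriv v) r) r := by
      have := ((hasDerivAt_pow 2 r).mul (hg.pow 2)).div_const 2
      refine this.congr_deriv ?_
      push_cast
      simp only [Pi.pow_apply]
      ring
    have h2 : HasDerivAt (fun s => v s ^ (p+1) / (p+1)) (v r ^ p * deriv v r) r := by
      have := (hv.rpow_const (p := p+1) (Or.inl (hpos r hr0).ne')).div_const (p+1)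
      refine this.congr_deriv ?_
      rw [show p + 1 - 1 = p by ring]
      field_simp
    have h3 : HasDerivAt (fun s => L ^ (p-1) * (v s)^2 / 2)
        (L ^ (p-1) * v r * deriv v r) r := by
      have := ((hv.pow 2).const_mul (L ^ (p-1))).div_const 2
      refine this.congr_deriv ?_
      push_cast
      ring
    have hE' := (h1.add h2).sub h3
    refine hE'.congr_deriv ?_
    have heqr := heq r hr0
    have hr2 : r ^ (-2:ℝ) = (r^2)⁻¹ := by
      rw [show (-2:ℝ) = -((2:ℕ):ℝ) by norm_num, Real.rpow_neg hr0.le, Real.rpow_natCast]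
    rw [hr2] at heqr
    have hrne : r ≠ 0 := hr0.ne'
    have h4 : deriv (deriv v) r
        = -((((n:ℝ) - 1 - 2*α) / r + r / 2) * deriv v r)
          - (r^2)⁻¹ * (v r ^ p - L ^ (p-1) * v r) := by linarith
    rw [h4, hc_def]
    field_simp
    ring
  -- bounds on v and r v' on (0,1]
  have hvle : ∀ r ∈ Ioo (0:ℝ) 1, v r ≤ C₀ ∧ r * |deriv v r| ≤ C₀ := by
    intro r hr
    have h := hbd r hr
    have h1 : 0 ≤ r * |deriv v r| := mul_nonneg hr.1.le (abs_nonneg _)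
    have h2 : 0 ≤ r^2 * |deriv (deriv v) r| := by positivity
    have h3 : 0 ≤ v r := (hpos r hr.1).le
    exact ⟨by linarith, by linarith⟩
  have hC₀ : 0 < C₀ := lt_of_lt_of_le (hpos (1/2) (by norm_num))
    (hvle (1/2) (by norm_num)).1
  have hv1 : v 1 ≤ C₀ := by
    have hcont : ContinuousAt v 1 :=
      (hvcont.continuousAt (Ioi_mem_nhds (by norm_num : (0:ℝ) < 1)))
    have htend : Tendsto v (𝓝[<] (1:ℝ)) (𝓝 (v 1)) :=
      hcont.continuousWithinAt.tendsto
    refine le_of_tendsto htend ?_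
    filter_upwards [self_mem_nhdsWithin,
      eventually_nhdsWithin_of_eventually_nhds
        (eventually_gt_nhds (by norm_num : (0:ℝ) < 1))] with r h1 h2
    exact (hvle r ⟨h2, h1⟩).1
  have hvle' : ∀ r, 0 < r → r ≤ 1 → v r ≤ C₀ := by
    intro r hr0 hr1
    rcases lt_or_eq_of_le hr1 with h | h
    · exact (hvle r ⟨hr0, h⟩).1
    · rw [h]; exact hv1
  set B : ℝ := C₀^2/2 + C₀ ^ (p+1) / (p+1) + L ^ (p-1) * C₀^2 / 2 with hB_def
  have hB : 0 < B := by
    have : 0 < C₀ ^ (p+1) := Real.rpow_pos_of_pos hC₀ _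
    have hp2 : 0 < p + 1 := by linarith
    positivity
  refine ⟨B / c, by positivity, ?_⟩
  intro ρ R hρ hρR hR1
  have hρ1 : ρ < 1 := lt_of_lt_of_le hρR hR1
  have hR0 : 0 < R := hρ.trans hρR
  have hsub : uIcc ρ R ⊆ Ioi 0 := by
    rw [uIcc_of_le hρR.le]
    exact fun x hx => lt_of_lt_of_le hρ hx.1
  have hcontw : ContinuousOn (fun r => (deriv v r)^2 * r) (uIcc ρ R) :=
    (((hgcont.mono hsub).pow 2).mul continuousOn_id)
  have hcontw2 : ContinuousOn (fun r => r^3/2 * (deriv v r)^2) (uIcc ρ R) :=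
    (((continuousOn_id.pow 3).div_const 2).mul ((hgcont.mono hsub).pow 2))
  have hint1 : IntervalIntegrable (fun r => (deriv v r)^2 * r) MeasureTheory.volume ρ R :=
    hcontw.intervalIntegrable
  have hint1' : IntervalIntegrable (fun r => c * ((deriv v r)^2 * r)) MeasureTheory.volume ρ R :=
    (hcontw.const_smul c).intervalIntegrable
  have hint2 : IntervalIntegrable (fun r => r^3/2 * (deriv v r)^2) MeasureTheory.volume ρ R :=
    hcontw2.intervalIntegrable
  have hftc : (∫ r in ρ..R, -(c * ((deriv v r)^2 * r) + r^3/2 * (deriv v r)^2)) = E R - E ρ := by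
    apply intervalIntegral.integral_eq_sub_of_hasDerivAt
    · exact fun x hx => hE x (hsub hx)
    · exact (hint1'.add hint2).neg
  have hsum : (∫ r in ρ..R, c * ((deriv v r)^2 * r)) + (∫ r in ρ..R, r^3/2 * (deriv v r)^2)
      = E ρ - E R := by
    rw [← intervalIntegral.integral_add hint1' hint2]
    rw [intervalIntegral.integral_neg] at hftc
    linarith
  have hnn : 0 ≤ ∫ r in ρ..R, r^3/2 * (deriv v r)^2 := by
    apply intervalIntegral.integral_nonneg hρR.le
    intro x hx
    have hx0 : 0 < x := lt_of_lt_of_le hρ hx.1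
    positivity
  have hconst : (∫ r in ρ..R, c * ((deriv v r)^2 * r))
      = c * ∫ r in ρ..R, (deriv v r)^2 * r := intervalIntegral.integral_const_mul _ _
  -- bound E ρ
  have hρbd := hvle ρ ⟨hρ, hρ1⟩
  have hEρ : E ρ ≤ C₀^2/2 + C₀ ^ (p+1) / (p+1) := by
    have h1 : ρ^2 * (deriv v ρ)^2 ≤ C₀^2 := by
      have h := mul_self_le_mul_self (mul_nonneg hρ.le (abs_nonneg (deriv v ρ))) hρbd.2
      calc ρ^2 * (deriv v ρ)^2 = (ρ*|deriv v ρ|)*(ρ*|deriv v ρ|) := by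
            rw [← sq_abs (deriv v ρ)]; ring
        _ ≤ C₀*C₀ := h
        _ = C₀^2 := (sq C₀).symm
    have h2 : v ρ ^ (p+1) ≤ C₀ ^ (p+1) :=
      Real.rpow_le_rpow (hpos ρ hρ).le hρbd.1 (by linarith)
    have h3 : 0 ≤ L ^ (p-1) * (v ρ)^2 / 2 := by positivity
    have hp2 : 0 < p + 1 := by linarith
    rw [hE_def]
    have h2' : v ρ ^ (p+1) / (p+1) ≤ C₀ ^ (p+1) / (p+1) :=
      (div_le_div_iff_of_pos_right hp2).mpr h2
    dsimp only
    linarith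
  -- bound -E R
  have hER : -(L ^ (p-1) * C₀^2 / 2) ≤ E R := by
    have h1 : 0 ≤ R^2 * (deriv v R)^2 / 2 := by positivity
    have h2 : 0 ≤ v R ^ (p+1) / (p+1) := by
      have := Real.rpow_pos_of_pos (hpos R hR0) (p+1)
      have hp2 : 0 < p + 1 := by linarith
      positivity
    have h3 : L ^ (p-1) * (v R)^2 / 2 ≤ L ^ (p-1) * C₀^2 / 2 := by
      have hvR : v R ≤ C₀ := hvle' R hR0 hR1
      have hvR0 : 0 ≤ v R := (hpos R hR0).le
      have hsq : (v R)^2 ≤ C₀^2 := by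
        calc (v R)^2 = v R * v R := sq (v R)
          _ ≤ C₀ * C₀ := mul_self_le_mul_self hvR0 hvR
          _ = C₀^2 := (sq C₀).symm
      have h4 := mul_le_mul_of_nonneg_left hsq hLpos.le
      linarith
    rw [hE_def]
    dsimp only
    linarith
  have hfinal : c * ∫ r in ρ..R, (deriv v r)^2 * r ≤ B := by
    rw [← hconst, hB_def]
    linarith
  rw [le_div_iff₀ hc]
  linarith [hfinal, mul_comm c (∫ r in ρ..R, (deriv v r)^2 * r)]
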